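/- Let Ω = {ω_1, …, ω_12} and let 𝓘 = { {ω_1, ω_2, ω_3, ω_4}, {ω_4, ω_5, ω_6, ω_7}, {ω_7, ω_8, ω_9, ω_10}, {ω_10, ω_11, ω_12, ω_1}, {ω_2, ω_5, ω_8, ω_11} }. If P is a partition of Ω into exactly 4 nonempty blocks satisfying the 𝒥-minimal compatibility condition with respect to 𝓘, and the set {ω_1, ω_2, ω_3, ω_4} is contained in a single block of P, then P is one of the two partitions: {{ω_1, ω_2, ω_3, ω_4}, {ω_7, ω_8, ω_9, ω_10}, {ω_5, ω_12}, {ω_11, ω_6}} or {{ω_1, ω_2, ω_3, ω_4, ω_9}, {ω_5, ω_10}, {ω_7, ω_11}, {ω_6, ω_8, ω_12}}. -/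
import Mathlib


/-- `P` is a partition of `Ω` into exactly `r` nonempty pairwise disjoint blocks
whose union is `Ω`. -/
def isPartitionInto {Ω : Type*} [Fintype Ω] [DecidableEq Ω]
    (P : Finset (Finset Ω)) (r : ℕ) : Prop :=
  P.card = r ∧ (∀ B ∈ P, B.Nonempty) ∧
    (∀ B ∈ P, ∀ C ∈ P, B ≠ C → Disjoint B C) ∧ P.biUnion id = Finset.univ

/-- The 𝒥-minimal compatibility condition: every member `S` of `I` is either contained
in a single block of `P`, or its elements lie in pairwise distinct blocks of `P`. -/
def JCompat {Ω : Type*} [DecidableEq Ω] (P : Finset (Finset Ω))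
    (I : Finset (Finset Ω)) : Prop :=
  ∀ S ∈ I, (∃ B ∈ P, S ⊆ B) ∨
    (∀ x ∈ S, ∀ y ∈ S, ∀ B ∈ P, x ∈ B → y ∈ B → x = y)

/-- The collection 𝓘 of `4`-element subsets of `Fin 12`, where `ω_i` corresponds to
`i - 1 : Fin 12`. -/
def I12 : Finset (Finset (Fin 12)) :=
  {{0,1,2,3},{3,4,5,6},{6,7,8,9},{9,10,11,0},{1,4,7,10}}

theorem stmt7 (P : Finset (Finset (Fin 12)))
    (hP : isPartitionInto P 4) (hcompat : JCompat P I12)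
    (hblock : ∃ B ∈ P, ({0,1,2,3} : Finset (Fin 12)) ⊆ B) :
    P = {{0,1,2,3},{6,7,8,9},{4,11},{10,5}} ∨
    P = {{0,1,2,3,8},{4,9},{6,10},{5,7,11}} := by

  obtain ⟨hcard, hne, hdisj, hcover⟩ := hP
  have huniq : ∀ (x : Fin 12) (B C : Finset (Fin 12)), B ∈ P → C ∈ P →
      x ∈ B → x ∈ C → B = C := by
    intro x B C hB hC hxB hxC
    by_contra h
    exact Finset.disjoint_left.mp (hdisj B hB C hC h) hxB hxC
  have hex : ∀ x : Fin 12, ∃ B ∈ P, x ∈ B := by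
    intro x
    have : x ∈ P.biUnion id := by rw [hcover]; exact Finset.mem_univ x
    simpa using this
  obtain ⟨B1, hB1, hsB1⟩ := hblock
  have h0 : (0:Fin 12) ∈ B1 := hsB1 (by decide)
  have h1 : (1:Fin 12) ∈ B1 := hsB1 (by decide)
  have h2 : (2:Fin 12) ∈ B1 := hsB1 (by decide)
  have h3 : (3:Fin 12) ∈ B1 := hsB1 (by decide)
  rcases hcompat {3,4,5,6} (by decide) with ⟨B, hB, hsB⟩ | hd2
  · -- collapse case: everything ends up in B1, contradiction
    exfalso
    have hBeq : B = B1 := huniq 3 B B1 hB hB1 (hsB (by decide)) h3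
    subst hBeq
    have h4 : (4:Fin 12) ∈ B := hsB (by decide)
    have h5 : (5:Fin 12) ∈ B := hsB (by decide)
    have h6 : (6:Fin 12) ∈ B := hsB (by decide)
    rcases hcompat {1,4,7,10} (by decide) with ⟨C, hC, hsC⟩ | hd5
    · have hCeq : C = B := huniq 1 C B hC hB1 (hsC (by decide)) h1
      subst hCeq
      have h7 : (7:Fin 12) ∈ C := hsC (by decide)
      have h10 : (10:Fin 12) ∈ C := hsC (by decide)
      rcases hcompat {6,7,8,9} (by decide) with ⟨D, hD, hsD⟩ | hd3
      · have hDeq : D = C := huniq 6 D C hD hB1 (hsD (by decide)) h6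
        subst hDeq
        have h8 : (8:Fin 12) ∈ D := hsD (by decide)
        have h9 : (9:Fin 12) ∈ D := hsD (by decide)
        rcases hcompat {9,10,11,0} (by decide) with ⟨E, hE, hsE⟩ | hd4
        · have hEeq : E = D := huniq 9 E D hE hB1 (hsE (by decide)) h9
          subst hEeq
          have h11 : (11:Fin 12) ∈ E := hsE (by decide)
          have hlt : 1 < P.card := by rw [hcard]; norm_num
          obtain ⟨F, hFP, hFne⟩ := Finset.exists_mem_ne hlt E
          obtain ⟨y, hy⟩ := hne F hFP
          have hyE : y ∈ E := by fin_cases y <;> assumption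
          exact hFne (huniq y F E hFP hB1 hy hyE)
        · exact absurd (hd4 9 (by decide) 0 (by decide) D hB1 h9 h0) (by decide)
      · exact absurd (hd3 6 (by decide) 7 (by decide) C hB1 h6 h7) (by decide)
    · exact absurd (hd5 1 (by decide) 4 (by decide) B hB1 h1 h4) (by decide)
  · -- main case: 3,4,5,6 in pairwise distinct blocks
    obtain ⟨B2, hB2, h4⟩ := hex 4
    obtain ⟨B3, hB3, h5⟩ := hex 5
    obtain ⟨B4, hB4, h6⟩ := hex 6
    have hne12 : B1 ≠ B2 := by
      intro h; rw [← h] at h4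
      exact absurd (hd2 3 (by decide) 4 (by decide) B1 hB1 h3 h4) (by decide)
    have hne13 : B1 ≠ B3 := by
      intro h; rw [← h] at h5
      exact absurd (hd2 3 (by decide) 5 (by decide) B1 hB1 h3 h5) (by decide)
    have hne14 : B1 ≠ B4 := by
      intro h; rw [← h] at h6
      exact absurd (hd2 3 (by decide) 6 (by decide) B1 hB1 h3 h6) (by decide)
    have hne23 : B2 ≠ B3 := by
      intro h; rw [← h] at h5
      exact absurd (hd2 4 (by decide) 5 (by decide) B2 hB2 h4 h5) (by decide)
    have hne24 : B2 ≠ B4 := by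
      intro h; rw [← h] at h6
      exact absurd (hd2 4 (by decide) 6 (by decide) B2 hB2 h4 h6) (by decide)
    have hne34 : B3 ≠ B4 := by
      intro h; rw [← h] at h6
      exact absurd (hd2 5 (by decide) 6 (by decide) B3 hB3 h5 h6) (by decide)
    have hcard4 : ({B1,B2,B3,B4} : Finset (Finset (Fin 12))).card = 4 := by
      rw [Finset.card_insert_of_notMem (by simp [hne12, hne13, hne14]),
          Finset.card_insert_of_notMem (by simp [hne23, hne24]),
          Finset.card_insert_of_notMem (by simp [hne34]),
          Finset.card_singleton]
    have hsubP : ({B1,B2,B3,B4} : Finset (Finset (Fin 12))) ⊆ P := by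
      intro B hB
      simp only [Finset.mem_insert, Finset.mem_singleton] at hB
      rcases hB with rfl | rfl | rfl | rfl <;> assumption
    have hPeq : P = {B1,B2,B3,B4} :=
      (Finset.eq_of_subset_of_card_le hsubP (by rw [hcard, hcard4])).symm
    have hloc : ∀ x : Fin 12, x ∈ B1 ∨ x ∈ B2 ∨ x ∈ B3 ∨ x ∈ B4 := by
      intro x
      obtain ⟨B, hB, hx⟩ := hex x
      rw [hPeq] at hB
      simp only [Finset.mem_insert, Finset.mem_singleton] at hB
      rcases hB with rfl | rfl | rfl | rfl <;> tauto
    rcases hcompat {1,4,7,10} (by decide) with ⟨C, hC, hsC⟩ | hd5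
    · exfalso
      have e1 : C = B1 := huniq 1 C B1 hC hB1 (hsC (by decide)) h1
      have e2 : C = B2 := huniq 4 C B2 hC hB2 (hsC (by decide)) h4
      exact hne12 (e1.symm.trans e2)
    · have h7 : (7:Fin 12) ∈ B3 ∨ (7:Fin 12) ∈ B4 := by
        rcases hloc 7 with h | h | h | h
        · exact absurd (hd5 7 (by decide) 1 (by decide) B1 hB1 h h1) (by decide)
        · exact absurd (hd5 7 (by decide) 4 (by decide) B2 hB2 h h4) (by decide)
        · exact Or.inl h
        · exact Or.inr h
      have h10 : (10:Fin 12) ∈ B3 ∨ (10:Fin 12) ∈ B4 := by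
        rcases hloc 10 with h | h | h | h
        · exact absurd (hd5 10 (by decide) 1 (by decide) B1 hB1 h h1) (by decide)
        · exact absurd (hd5 10 (by decide) 4 (by decide) B2 hB2 h h4) (by decide)
        · exact Or.inl h
        · exact Or.inr h
      have hd4 : ∀ x ∈ ({9,10,11,0} : Finset (Fin 12)), ∀ y ∈ ({9,10,11,0} : Finset (Fin 12)),
          ∀ B ∈ P, x ∈ B → y ∈ B → x = y := by
        rcases hcompat {9,10,11,0} (by decide) with ⟨C, hC, hsC⟩ | hd4
        · exfalso
          have e0 : C = B1 := huniq 0 C B1 hC hB1 (hsC (by decide)) h0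
          rcases h10 with h | h
          · exact hne13 (e0.symm.trans (huniq 10 C B3 hC hB3 (hsC (by decide)) h))
          · exact hne14 (e0.symm.trans (huniq 10 C B4 hC hB4 (hsC (by decide)) h))
        · exact hd4
      rcases h7 with h7 | h7
      · -- Case A: 7 ∈ B3, forces 10 ∈ B4
        have h10' : (10:Fin 12) ∈ B4 := by
          rcases h10 with h | h
          · exact absurd (hd5 10 (by decide) 7 (by decide) B3 hB3 h h7) (by decide)
          · exact h
        rcases hcompat {6,7,8,9} (by decide) with ⟨C, hC, hsC⟩ | hd3
        · exfalso
          have e1 : C = B4 := huniq 6 C B4 hC hB4 (hsC (by decide)) h6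
          have e2 : C = B3 := huniq 7 C B3 hC hB3 (hsC (by decide)) h7
          exact hne34 (e2.symm.trans e1)
        · have h9 : (9:Fin 12) ∈ B2 := by
            rcases hloc 9 with h | h | h | h
            · exact absurd (hd4 9 (by decide) 0 (by decide) B1 hB1 h h0) (by decide)
            · exact h
            · exact absurd (hd3 9 (by decide) 7 (by decide) B3 hB3 h h7) (by decide)
            · exact absurd (hd3 9 (by decide) 6 (by decide) B4 hB4 h h6) (by decide)
          have h8 : (8:Fin 12) ∈ B1 := by
            rcases hloc 8 with h | h | h | h
            · exact h
            · exact absurd (hd3 8 (by decide) 9 (by decide) B2 hB2 h h9) (by decide)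
            · exact absurd (hd3 8 (by decide) 7 (by decide) B3 hB3 h h7) (by decide)
            · exact absurd (hd3 8 (by decide) 6 (by decide) B4 hB4 h h6) (by decide)
          have h11 : (11:Fin 12) ∈ B3 := by
            rcases hloc 11 with h | h | h | h
            · exact absurd (hd4 11 (by decide) 0 (by decide) B1 hB1 h h0) (by decide)
            · exact absurd (hd4 11 (by decide) 9 (by decide) B2 hB2 h h9) (by decide)
            · exact h
            · exact absurd (hd4 11 (by decide) 10 (by decide) B4 hB4 h h10') (by decide)
          have e1 : B1 = ({0,1,2,3,8} : Finset (Fin 12)) := by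
            apply Finset.Subset.antisymm
            · intro x hx
              fin_cases x <;>
                first
                | decide
                | exact absurd (huniq _ _ _ hB1 hB2 hx ‹_›) hne12
                | exact absurd (huniq _ _ _ hB1 hB3 hx ‹_›) hne13
                | exact absurd (huniq _ _ _ hB1 hB4 hx ‹_›) hne14
            · intro x hx; fin_cases hx <;> assumption
          have e2 : B2 = ({4,9} : Finset (Fin 12)) := by
            apply Finset.Subset.antisymm
            · intro x hx
              fin_cases x <;>
                first
                | decide
                | exact absurd (huniq _ _ _ hB2 hB1 hx ‹_›) (Ne.symm hne12)
                | exact absurd (huniq _ _ _ hB2 hB3 hx ‹_›) hne23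
                | exact absurd (huniq _ _ _ hB2 hB4 hx ‹_›) hne24
            · intro x hx; fin_cases hx <;> assumption
          have e3 : B3 = ({5,7,11} : Finset (Fin 12)) := by
            apply Finset.Subset.antisymm
            · intro x hx
              fin_cases x <;>
                first
                | decide
                | exact absurd (huniq _ _ _ hB3 hB1 hx ‹_›) (Ne.symm hne13)
                | exact absurd (huniq _ _ _ hB3 hB2 hx ‹_›) (Ne.symm hne23)
                | exact absurd (huniq _ _ _ hB3 hB4 hx ‹_›) hne34
            · intro x hx; fin_cases hx <;> assumption
          have e4 : B4 = ({6,10} : Finset (Fin 12)) := by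
            apply Finset.Subset.antisymm
            · intro x hx
              fin_cases x <;>
                first
                | decide
                | exact absurd (huniq _ _ _ hB4 hB1 hx ‹_›) (Ne.symm hne14)
                | exact absurd (huniq _ _ _ hB4 hB2 hx ‹_›) (Ne.symm hne24)
                | exact absurd (huniq _ _ _ hB4 hB3 hx ‹_›) (Ne.symm hne34)
            · intro x hx; fin_cases hx <;> assumption
          right
          rw [hPeq, e1, e2, e3, e4]
          decide
      · -- Case B: 7 ∈ B4, forces 10 ∈ B3
        have h10' : (10:Fin 12) ∈ B3 := by
          rcases h10 with h | h
          · exact h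
          · exact absurd (hd5 10 (by decide) 7 (by decide) B4 hB4 h h7) (by decide)
        rcases hcompat {6,7,8,9} (by decide) with ⟨C, hC, hsC⟩ | hd3
        · -- containment: C = B4, so 8,9 ∈ B4
          have hCeq : C = B4 := huniq 6 C B4 hC hB4 (hsC (by decide)) h6
          subst hCeq
          have h8 : (8:Fin 12) ∈ C := hsC (by decide)
          have h9 : (9:Fin 12) ∈ C := hsC (by decide)
          have h11 : (11:Fin 12) ∈ B2 := by
            rcases hloc 11 with h | h | h | h
            · exact absurd (hd4 11 (by decide) 0 (by decide) B1 hB1 h h0) (by decide)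
            · exact h
            · exact absurd (hd4 11 (by decide) 10 (by decide) B3 hB3 h h10') (by decide)
            · exact absurd (hd4 11 (by decide) 9 (by decide) C hB4 h h9) (by decide)
          have e1 : B1 = ({0,1,2,3} : Finset (Fin 12)) := by
            apply Finset.Subset.antisymm
            · intro x hx
              fin_cases x <;>
                first
                | decide
                | exact absurd (huniq _ _ _ hB1 hB2 hx ‹_›) hne12
                | exact absurd (huniq _ _ _ hB1 hB3 hx ‹_›) hne13
                | exact absurd (huniq _ _ _ hB1 hB4 hx ‹_›) hne14
            · intro x hx; fin_cases hx <;> assumption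
          have e2 : B2 = ({4,11} : Finset (Fin 12)) := by
            apply Finset.Subset.antisymm
            · intro x hx
              fin_cases x <;>
                first
                | decide
                | exact absurd (huniq _ _ _ hB2 hB1 hx ‹_›) (Ne.symm hne12)
                | exact absurd (huniq _ _ _ hB2 hB3 hx ‹_›) hne23
                | exact absurd (huniq _ _ _ hB2 hB4 hx ‹_›) hne24
            · intro x hx; fin_cases hx <;> assumption
          have e3 : B3 = ({10,5} : Finset (Fin 12)) := by
            apply Finset.Subset.antisymm
            · intro x hx
              fin_cases x <;>
                first
                | decide
                | exact absurd (huniq _ _ _ hB3 hB1 hx ‹_›) (Ne.symm hne13)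
                | exact absurd (huniq _ _ _ hB3 hB2 hx ‹_›) (Ne.symm hne23)
                | exact absurd (huniq _ _ _ hB3 hB4 hx ‹_›) hne34
            · intro x hx; fin_cases hx <;> assumption
          have e4 : C = ({6,7,8,9} : Finset (Fin 12)) := by
            apply Finset.Subset.antisymm
            · intro x hx
              fin_cases x <;>
                first
                | decide
                | exact absurd (huniq _ _ _ hB4 hB1 hx ‹_›) (Ne.symm hne14)
                | exact absurd (huniq _ _ _ hB4 hB2 hx ‹_›) (Ne.symm hne24)
                | exact absurd (huniq _ _ _ hB4 hB3 hx ‹_›) (Ne.symm hne34)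
            · intro x hx; fin_cases hx <;> assumption
          left
          rw [hPeq, e1, e2, e3, e4]
          decide
        · exact absurd (hd3 6 (by decide) 7 (by decide) B4 hB4 h6 h7) (by decide)
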